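/- arXiv:2409.14156 — 11 statements merged into one kernel-verified Lean document; each statement's English description precedes it below -/
import Mathlib

section
/- For 0 < q < 1, ν > 0, s > 0, and b ≥ (2-q)·(νsq/(1-q)^(1-q))^(1/(2-q)), the equation t + νsq·t^(q-1) = b has at most two roots t₁, t₂ in (0,∞), and they satisfy 0 < t₁ ≤ (νsq(1-q))^(1/(2-q)) ≤ t₂ < b. -/
open Real Set

theorem stmt_1 (q ν s b : ℝ) (hq0 : 0 < q) (hq1 : q < 1) (hν : 0 < ν) (hs : 0 < s)
    (hb : (2 - q) * (ν * s * q / (1 - q) ^ (1 - q)) ^ ((1 : ℝ) / (2 - q)) ≤ b)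
    (g : ℝ → ℝ) (hg : ∀ t : ℝ, g t = t + ν * s * q * t ^ (q - 1) - b)
    (that : ℝ) (hhat : that = (ν * s * q * (1 - q)) ^ ((1 : ℝ) / (2 - q))) :
    (¬ ∃ t₁ t₂ t₃ : ℝ, t₁ ∈ Set.Ioi (0 : ℝ) ∧ t₂ ∈ Set.Ioi (0 : ℝ) ∧ t₃ ∈ Set.Ioi (0 : ℝ) ∧
        g t₁ = 0 ∧ g t₂ = 0 ∧ g t₃ = 0 ∧ t₁ ≠ t₂ ∧ t₁ ≠ t₃ ∧ t₂ ≠ t₃) ∧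
    (∀ t ∈ Set.Ioi (0 : ℝ), g t = 0 → 0 < t ∧ t < b) ∧
    (∀ t₁ ∈ Set.Ioi (0 : ℝ), ∀ t₂ ∈ Set.Ioi (0 : ℝ), g t₁ = 0 → g t₂ = 0 → t₁ < t₂ →
        t₁ ≤ that ∧ that ≤ t₂) := by
  have hge : g = fun t => t + ν * s * q * t ^ (q - 1) - b := funext hg
  subst hge
  subst hhat
  set c := ν * s * q with hc
  have hcpos : 0 < c := by positivity
  have hc1 : 0 < c * (1 - q) := by nlinarith
  have h2q : 0 < 2 - q := by linarith
  set T := (c * (1 - q)) ^ ((1 : ℝ) / (2 - q)) with hT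
  set f : ℝ → ℝ := fun t => t + c * t ^ (q - 1) - b with hf
  have hTpos : 0 < T := Real.rpow_pos_of_pos hc1 _
  have hTpow : T ^ (2 - q) = c * (1 - q) := by
    rw [hT, ← Real.rpow_mul hc1.le, one_div, inv_mul_cancel₀ h2q.ne', Real.rpow_one]
  have hderiv : ∀ x : ℝ, x ≠ 0 →
      HasDerivAt f (1 + c * ((q - 1) * x ^ (q - 1 - 1))) x := by
    intro x hx
    exact ((hasDerivAt_id x).add
      ((Real.hasDerivAt_rpow_const (Or.inl hx)).const_mul c)).sub_const b
  have hDpos : ∀ x : ℝ, T < x → 0 < 1 + c * ((q - 1) * x ^ (q - 1 - 1)) := by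
    intro x hx
    have hx0 : 0 < x := hTpos.trans hx
    have hxp : 0 < x ^ (2 - q) := Real.rpow_pos_of_pos hx0 _
    have hlt : c * (1 - q) < x ^ (2 - q) := by
      rw [← hTpow]; exact Real.rpow_lt_rpow hTpos.le hx h2q
    have hxe : x ^ (q - 1 - 1) = (x ^ (2 - q))⁻¹ := by
      rw [show q - 1 - 1 = -(2 - q) by ring, Real.rpow_neg hx0.le]
    rw [hxe]
    have h1 : c * ((q - 1) * (x ^ (2 - q))⁻¹) = -(c * (1 - q) / x ^ (2 - q)) := by
      field_simp; ring
    rw [h1]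
    have h2 : c * (1 - q) / x ^ (2 - q) < 1 := (div_lt_one hxp).mpr hlt
    linarith
  have hDneg : ∀ x : ℝ, 0 < x → x < T → 1 + c * ((q - 1) * x ^ (q - 1 - 1)) < 0 := by
    intro x hx0 hx
    have hxp : 0 < x ^ (2 - q) := Real.rpow_pos_of_pos hx0 _
    have hlt : x ^ (2 - q) < c * (1 - q) := by
      rw [← hTpow]; exact Real.rpow_lt_rpow hx0.le hx h2q
    have hxe : x ^ (q - 1 - 1) = (x ^ (2 - q))⁻¹ := by
      rw [show q - 1 - 1 = -(2 - q) by ring, Real.rpow_neg hx0.le]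
    rw [hxe]
    have h1 : c * ((q - 1) * (x ^ (2 - q))⁻¹) = -(c * (1 - q) / x ^ (2 - q)) := by
      field_simp; ring
    rw [h1]
    have h2 : 1 < c * (1 - q) / x ^ (2 - q) := (one_lt_div hxp).mpr hlt
    linarith
  have hmono : StrictMonoOn f (Ici T) := by
    apply strictMonoOn_of_deriv_pos (convex_Ici T)
    · intro x hx
      exact ((hderiv x (hTpos.trans_le hx).ne').continuousAt).continuousWithinAt
    · intro x hx
      rw [interior_Ici] at hx
      rw [(hderiv x (hTpos.trans hx).ne').deriv]
      exact hDpos x hx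
  have hanti : StrictAntiOn f (Ioc 0 T) := by
    apply strictAntiOn_of_deriv_neg (convex_Ioc 0 T)
    · intro x hx
      exact ((hderiv x hx.1.ne').continuousAt).continuousWithinAt
    · intro x hx
      rw [interior_Ioc] at hx
      rw [(hderiv x hx.1.ne').deriv]
      exact hDneg x hx.1 hx.2
  have uL : ∀ a a' : ℝ, 0 < a → 0 < a' → a ≤ T → a' ≤ T →
      f a = 0 → f a' = 0 → a = a' := by
    intro a a' ha ha' hle hle' e e'
    exact hanti.injOn ⟨ha, hle⟩ ⟨ha', hle'⟩ (by rw [e, e'])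
  have uG : ∀ a a' : ℝ, T ≤ a → T ≤ a' → f a = 0 → f a' = 0 → a = a' := by
    intro a a' hle hle' e e'
    exact hmono.injOn hle hle' (by rw [e, e'])
  refine ⟨?_, ?_, ?_⟩
  · rintro ⟨t₁, t₂, t₃, h1, h2, h3, e1, e2, e3, n12, n13, n23⟩
    have h1' : 0 < t₁ := h1
    have h2' : 0 < t₂ := h2
    have h3' : 0 < t₃ := h3
    rcases le_total t₁ T with a1 | a1 <;> rcases le_total t₂ T with a2 | a2 <;>
      rcases le_total t₃ T with a3 | a3 <;>
      first
        | exact n12 (uL t₁ t₂ h1' h2' a1 a2 e1 e2)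
        | exact n13 (uL t₁ t₃ h1' h3' a1 a3 e1 e3)
        | exact n23 (uL t₂ t₃ h2' h3' a2 a3 e2 e3)
        | exact n12 (uG t₁ t₂ a1 a2 e1 e2)
        | exact n13 (uG t₁ t₃ a1 a3 e1 e3)
        | exact n23 (uG t₂ t₃ a2 a3 e2 e3)
  · intro t ht he
    have ht' : 0 < t := ht
    refine ⟨ht', ?_⟩
    have he' : t + c * t ^ (q - 1) - b = 0 := he
    have hp : 0 < c * t ^ (q - 1) := mul_pos hcpos (Real.rpow_pos_of_pos ht' _)
    linarith
  · intro t₁ h1 t₂ h2 e1 e2 hlt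
    have h1' : 0 < t₁ := h1
    have h2' : 0 < t₂ := h2
    constructor
    · by_contra h
      push_neg at h
      have := hmono h.le (h.le.trans hlt.le) hlt
      rw [show f t₁ = 0 from e1, show f t₂ = 0 from e2] at this
      exact lt_irrefl 0 this
    · by_contra h
      push_neg at h
      have := hanti ⟨h1', (hlt.trans h).le⟩ ⟨h2', h.le⟩ hlt
      rw [show f t₁ = 0 from e1, show f t₂ = 0 from e2] at this
      exact lt_irrefl 0 this
end

section
/- Let 0 < q < 1, ν > 0, s > 0, and b ≥ (2-q)·(νsq/(1-q)^(1-q))^(1/(2-q)). Let t₁ ≤ t₂ be roots of t + νsq·t^(q-1) = b in (0,∞). Then h(t) = νt^q + t²/(2s) − (b/s)t is strictly increasing on [0,t₁] and on [t₂,∞), strictly decreasing on [t₁,t₂], and in particular h(t₂) ≤ h(t₁). -/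
open Real Set

theorem stmt_2 (q ν s b : ℝ) (hq0 : 0 < q) (hq1 : q < 1) (hν : 0 < ν) (hs : 0 < s)
    (hb : (2 - q) * (ν * s * q / (1 - q) ^ (1 - q)) ^ ((1 : ℝ) / (2 - q)) ≤ b)
    (t₁ t₂ : ℝ) (ht₁ : 0 < t₁) (ht₂ : 0 < t₂) (h12 : t₁ ≤ t₂)
    (hroot₁ : t₁ + ν * s * q * t₁ ^ (q - 1) = b)
    (hroot₂ : t₂ + ν * s * q * t₂ ^ (q - 1) = b)
    (hhat₁ : t₁ ≤ (ν * s * q * (1 - q)) ^ ((1 : ℝ) / (2 - q)))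
    (hhat₂ : (ν * s * q * (1 - q)) ^ ((1 : ℝ) / (2 - q)) ≤ t₂)
    (h : ℝ → ℝ) (hh : ∀ t : ℝ, h t = ν * t ^ q + t ^ 2 / (2 * s) - (b / s) * t) :
    StrictMonoOn h (Set.Icc 0 t₁) ∧ StrictMonoOn h (Set.Ici t₂) ∧
    StrictAntiOn h (Set.Icc t₁ t₂) ∧ h t₂ ≤ h t₁ := by
  set c : ℝ := ν * s * q with hc_def
  have hc : 0 < c := by positivity
  have h2q : (0:ℝ) < 2 - q := by linarith
  have h1q : (0:ℝ) < 1 - q := by linarith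
  set th : ℝ := (c * (1 - q)) ^ ((1 : ℝ) / (2 - q)) with hth_def
  have hth : 0 < th := rpow_pos_of_pos (by positivity) _
  have hthp : th ^ (2 - q) = c * (1 - q) := by
    rw [hth_def, one_div, Real.rpow_inv_rpow (by positivity) h2q.ne']
  set g : ℝ → ℝ := fun t => t + c * t ^ (q - 1) with hg_def
  -- derivative of g
  have hg' : ∀ t : ℝ, 0 < t → HasDerivAt g (1 + c * ((q - 1) * t ^ (q - 1 - 1))) t := by
    intro t ht
    exact (hasDerivAt_id t).add
      (((Real.hasDerivAt_rpow_const (Or.inl ht.ne')).const_mul c))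
  -- sign of g'
  have hsign : ∀ t : ℝ, 0 < t →
      (1 + c * ((q - 1) * t ^ (q - 1 - 1)) = 1 - c * (1 - q) / t ^ (2 - q)) := by
    intro t ht
    have : t ^ (q - 1 - 1) = (t ^ (2 - q))⁻¹ := by
      rw [← Real.rpow_neg ht.le]; ring_nf
    rw [this]; field_simp; ring
  have htpow : ∀ t : ℝ, 0 < t → (th < t ↔ c * (1 - q) < t ^ (2 - q)) := by
    intro t ht
    rw [← hthp, Real.rpow_lt_rpow_iff hth.le ht.le h2q]
  -- g strictly anti on Ioc 0 th, strictly mono on Ici th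
  have hgc : ∀ (D : Set ℝ), (∀ x ∈ D, (0:ℝ) < x) → ContinuousOn g D := by
    intro D hD
    refine continuousOn_id.add (continuousOn_const.mul ?_)
    exact fun x hx => (Real.continuousAt_rpow_const x (q - 1)
      (Or.inl (hD x hx).ne')).continuousWithinAt
  have hganti : StrictAntiOn g (Ioc 0 th) := by
    apply strictAntiOn_of_deriv_neg (convex_Ioc 0 th) (hgc _ (fun x hx => hx.1))
    intro x hx
    rw [interior_Ioc] at hx
    have hx0 : 0 < x := hx.1
    rw [((hg' x hx0).deriv), hsign x hx0]
    have hxlt : x ^ (2 - q) < c * (1 - q) := by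
      rw [← hthp]
      exact Real.rpow_lt_rpow hx0.le hx.2 h2q
    have hxp : 0 < x ^ (2 - q) := rpow_pos_of_pos hx0 _
    have : 1 < c * (1 - q) / x ^ (2 - q) := (one_lt_div hxp).2 hxlt
    linarith
  have hgmono : StrictMonoOn g (Ici th) := by
    apply strictMonoOn_of_deriv_pos (convex_Ici th) (hgc _ (fun x hx => lt_of_lt_of_le hth hx))
    intro x hx
    rw [interior_Ici] at hx
    have hx0 : 0 < x := hth.trans hx
    rw [((hg' x hx0).deriv), hsign x hx0]
    have hxlt : c * (1 - q) < x ^ (2 - q) := (htpow x hx0).1 hx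
    have hxp : 0 < x ^ (2 - q) := rpow_pos_of_pos hx0 _
    have : c * (1 - q) / x ^ (2 - q) < 1 := (div_lt_one hxp).2 hxlt
    linarith
  -- comparisons of g with b
  have hgt1 : g t₁ = b := hroot₁
  have hgt2 : g t₂ = b := hroot₂
  have hbig1 : ∀ t : ℝ, 0 < t → t < t₁ → b < g t := by
    intro t ht htt
    rw [← hgt1]
    exact hganti ⟨ht, le_of_lt (htt.trans_le hhat₁)⟩ ⟨ht₁, hhat₁⟩ htt
  have hbig2 : ∀ t : ℝ, t₂ < t → b < g t := by
    intro t htt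
    rw [← hgt2]
    exact hgmono hhat₂ (hhat₂.trans htt.le) htt
  have hsmall : ∀ t : ℝ, t₁ < t → t < t₂ → g t < b := by
    intro t h1 h2
    rcases le_total t th with hle | hle
    · rw [← hgt1]
      exact hganti ⟨ht₁, hhat₁⟩ ⟨ht₁.trans h1, hle⟩ h1
    · rw [← hgt2]
      exact hgmono hle hhat₂ h2
  -- derivative of h
  have heqf : h = fun t => ν * t ^ q + t ^ 2 / (2 * s) - b / s * t := funext hh
  have hh' : ∀ t : ℝ, 0 < t → HasDerivAt h ((g t - b) / s) t := by
    intro t ht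
    rw [heqf]
    have H : HasDerivAt (fun t : ℝ => ν * t ^ q + t ^ 2 / (2 * s) - b / s * t)
        (ν * (q * t ^ (q - 1)) + (2 * t ^ 1) / (2 * s) - b / s * 1) t := by
      have h1 : HasDerivAt (fun t : ℝ => t ^ q) (q * t ^ (q - 1)) t :=
        Real.hasDerivAt_rpow_const (Or.inl ht.ne')
      have h2 : HasDerivAt (fun t : ℝ => t ^ (2:ℕ)) ((2:ℕ) * t ^ ((2:ℕ) - 1)) t :=
        hasDerivAt_pow 2 t
      have := ((h1.const_mul ν).add (h2.div_const (2 * s))).sub ((hasDerivAt_id t).const_mul (b / s))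
      exact this.congr_deriv (by push_cast; ring)
    convert H using 1
    rw [hg_def]
    field_simp
    ring
  have hhc : Continuous h := by
    have : Continuous (fun t : ℝ => ν * t ^ q + t ^ 2 / (2 * s) - b / s * t) := by
      refine ((continuous_const.mul ?_).add (continuous_pow 2 |>.div_const _)).sub
        (continuous_const.mul continuous_id)
      exact continuous_iff_continuousAt.2 fun x =>
        Real.continuousAt_rpow_const x q (Or.inr hq0.le)
    simpa [funext hh] using this
  have H1 : StrictMonoOn h (Set.Icc 0 t₁) := by
    apply strictMonoOn_of_deriv_pos (convex_Icc 0 t₁) hhc.continuousOn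
    intro x hx
    rw [interior_Icc] at hx
    rw [(hh' x hx.1).deriv]
    have := hbig1 x hx.1 hx.2
    exact div_pos (by linarith) hs
  have H2 : StrictMonoOn h (Set.Ici t₂) := by
    apply strictMonoOn_of_deriv_pos (convex_Ici t₂) hhc.continuousOn
    intro x hx
    rw [interior_Ici] at hx
    rw [(hh' x (ht₂.trans hx)).deriv]
    have := hbig2 x hx
    exact div_pos (by linarith) hs
  have H3 : StrictAntiOn h (Set.Icc t₁ t₂) := by
    apply strictAntiOn_of_deriv_neg (convex_Icc t₁ t₂) hhc.continuousOn
    intro x hx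
    rw [interior_Icc] at hx
    rw [(hh' x (ht₁.trans hx.1)).deriv]
    have := hsmall x hx.1 hx.2
    exact div_neg_of_neg_of_pos (by linarith) hs
  refine ⟨H1, H2, H3, ?_⟩
  rcases eq_or_lt_of_le h12 with heq | hlt
  · rw [heq]
  · exact (H3 (left_mem_Icc.2 h12) (right_mem_Icc.2 h12) hlt).le
end

section
/- Let 0 < q < 1, ν > 0, and y ∈ ℝⁿ nonzero. If u ∈ ℝⁿ satisfies the stationarity condition y_i − u_i ∈ νq‖u‖₁^(q-1)·Sign(u)_i for all i, then for every index i with u_i ≠ 0 we have sign(u_i) = sign(y_i) and |u_i| < |y_i|, and u_i = y_i − νq‖u‖₁^(q-1)·sign(u_i). -/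
open Real Set

/-- The componentwise sign set: {1} if x > 0, [-1,1] if x = 0, {-1} if x < 0. -/
def SignSet (x : ℝ) : Set ℝ :=
  if 0 < x then {1} else if x < 0 then {-1} else Set.Icc (-1) 1

theorem stmt_5 (n : ℕ) (q ν : ℝ) (hq0 : 0 < q) (hq1 : q < 1) (hν : 0 < ν)
    (y u : Fin n → ℝ) (hy : y ≠ 0) (hu : u ≠ 0)
    (hstat : ∀ i : Fin n,
      y i - u i ∈ (fun z : ℝ => ν * q * (∑ j, |u j|) ^ (q - 1) * z) '' SignSet (u i)) :
    ∀ i : Fin n, u i ≠ 0 →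
      Real.sign (u i) = Real.sign (y i) ∧ |u i| < |y i| ∧
      u i = y i - ν * q * (∑ j, |u j|) ^ (q - 1) * Real.sign (u i) := by
  intro i hui
  -- positivity of c
  obtain ⟨j, hj⟩ : ∃ j, u j ≠ 0 := by
    by_contra h
    push_neg at h
    exact hu (funext h)
  have hsum : (0:ℝ) < ∑ j, |u j| := by
    have : (0:ℝ) < |u j| := abs_pos.mpr hj
    calc (0:ℝ) < |u j| := this
      _ ≤ ∑ j, |u j| := Finset.single_le_sum (fun k _ => abs_nonneg (u k)) (Finset.mem_univ j)
  have hc : (0:ℝ) < ν * q * (∑ j, |u j|) ^ (q - 1) := by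
    have := Real.rpow_pos_of_pos hsum (q - 1)
    positivity
  set c := ν * q * (∑ j, |u j|) ^ (q - 1) with hcdef
  obtain ⟨z, hz, hz2⟩ := hstat i
  rcases lt_trichotomy (u i) 0 with hlt | heq | hgt
  · have : z = -1 := by
      simp only [SignSet, if_neg (not_lt.mpr hlt.le), if_pos hlt, Set.mem_singleton_iff] at hz
      exact hz
    subst this
    have hyi : y i = u i - c := by have h := hz2; simp only [] at h; linarith
    have hylt : y i < 0 := by nlinarith
    have hsu : Real.sign (u i) = -1 := Real.sign_of_neg hlt
    have hsy : Real.sign (y i) = -1 := Real.sign_of_neg hylt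
    refine ⟨by rw [hsu, hsy], ?_, ?_⟩
    · rw [abs_of_neg hlt, abs_of_neg hylt]; linarith
    · rw [hsu]; linarith
  · exact absurd heq hui
  · have : z = 1 := by
      simp only [SignSet, if_pos hgt, Set.mem_singleton_iff] at hz
      exact hz
    subst this
    have hyi : y i = u i + c := by have h := hz2; simp only [] at h; linarith
    have hygt : 0 < y i := by nlinarith
    have hsu : Real.sign (u i) = 1 := Real.sign_of_pos hgt
    have hsy : Real.sign (y i) = 1 := Real.sign_of_pos hygt
    refine ⟨by rw [hsu, hsy], ?_, ?_⟩
    · rw [abs_of_pos hgt, abs_of_pos hygt]; linarith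
    · rw [hsu]; linarith
end

section
/- Let 0 < q < 1, ν > 0, and y ∈ ℝⁿ nonzero. If u satisfies the stationarity condition y_i − u_i ∈ νq‖u‖₁^(q-1)·Sign(u)_i for all i (with u ≠ 0), then for every index i with |y_i| ≤ νq‖u‖₁^(q-1), one has u_i = 0. -/
open Real Set

theorem stmt_6 (n : ℕ) (q ν : ℝ) (hq0 : 0 < q) (hq1 : q < 1) (hν : 0 < ν)
    (y u : Fin n → ℝ) (hy : y ≠ 0) (hu : u ≠ 0)
    (hstat : ∀ i : Fin n,
      y i - u i ∈ (fun z : ℝ => ν * q * (∑ j, |u j|) ^ (q - 1) * z) '' SignSet (u i)) :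
    ∀ i : Fin n, |y i| ≤ ν * q * (∑ j, |u j|) ^ (q - 1) → u i = 0 := by
  intro i hi
  set c : ℝ := ν * q * (∑ j, |u j|) ^ (q - 1) with hc
  have hsum : 0 < ∑ j, |u j| := by
    rcases Function.ne_iff.mp hu with ⟨j, hj⟩
    have : 0 < |u j| := abs_pos.mpr hj
    exact lt_of_lt_of_le this (Finset.single_le_sum (fun k _ => abs_nonneg (u k)) (Finset.mem_univ j))
  have hcpos : 0 < c := by
    have := Real.rpow_pos_of_pos hsum (q - 1)
    positivity
  by_contra hne
  rcases lt_or_gt_of_ne hne with hlt | hgt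
  · rcases hstat i with ⟨z, hz, heq⟩
    simp only [SignSet, if_neg (not_lt.mpr hlt.le), if_pos hlt] at hz
    rw [hz] at heq
    simp only at heq
    have : y i = u i - c := by linarith
    have : y i < -c := by rw [this]; linarith
    have := neg_le_of_abs_le hi
    linarith
  · rcases hstat i with ⟨z, hz, heq⟩
    simp only [SignSet, if_pos hgt] at hz
    rw [hz] at heq
    simp only at heq
    have : y i = u i + c := by linarith
    have : y i > c := by rw [this]; linarith
    have := le_of_abs_le hi
    linarith
end

section
/- Let 0 < q < 1, ν > 0, and c_{ν,q} = ((2−q)/(2(1−q)))·(2ν(1−q))^(1/(2−q)). For y ∈ ℝⁿ with max_i |y_i| > c_{ν,q}, the zero vector is not a minimizer of J_y(u) = ν‖u‖₁^q + (1/2)‖u−y‖₂²; that is, there exists u ∈ ℝⁿ with J_y(u) < J_y(0) = (1/2)‖y‖₂². -/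
open Real Set

theorem stmt_7 (n : ℕ) (q ν : ℝ) (hq0 : 0 < q) (hq1 : q < 1) (hν : 0 < ν)
    (y : Fin n → ℝ)
    (hy : ∃ i : Fin n, ((2 - q) / (2 * (1 - q))) * (2 * ν * (1 - q)) ^ ((1:ℝ) / (2 - q)) < |y i|) :
    ∃ u : Fin n → ℝ,
      ν * (∑ i, |u i|) ^ q + (∑ i, (u i - y i) ^ 2) / 2 < (∑ i, (y i) ^ 2) / 2 := by
  obtain ⟨i, hi⟩ := hy
  set t := (2 * ν * (1 - q)) ^ ((1:ℝ) / (2 - q)) with htdef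
  clear_value t
  have h1q : 0 < 1 - q := by linarith
  have h2q : 0 < 2 - q := by linarith
  have hA : 0 < 2 * ν * (1 - q) := by positivity
  have ht : 0 < t := by rw [htdef]; exact Real.rpow_pos_of_pos hA _
  have ht2q : t ^ ((2:ℝ) - q) = 2 * ν * (1 - q) := by
    rw [htdef, ← Real.rpow_mul hA.le, one_div, inv_mul_cancel₀ h2q.ne', Real.rpow_one]
  have hsq : t ^ (2:ℝ) = (2 * ν * (1 - q)) * t ^ q := by
    have h2 : (2:ℝ) = (2 - q) + q := by ring
    rw [h2, Real.rpow_add ht]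
    rw [ht2q]; ring
  have hsq' : t * t = (2 * ν * (1 - q)) * t ^ q := by
    have h := hsq
    rwa [show (2:ℝ) = ((2:ℕ):ℝ) by norm_num, Real.rpow_natCast, sq] at h
  set v := if 0 ≤ y i then t else -t with hv
  have hvabs : |v| = t := by
    rw [hv]; split
    · exact abs_of_pos ht
    · rw [abs_neg]; exact abs_of_pos ht
  have hvmul : v * y i = t * |y i| := by
    rw [hv]; split
    · rw [abs_of_nonneg ‹_›]
    · rw [abs_of_neg (lt_of_not_ge ‹_›)]; ring
  have hvv : v * v = t * t := by
    rw [← hvabs]; exact (abs_mul_abs_self v).symm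
  refine ⟨Function.update (0 : Fin n → ℝ) i v, ?_⟩
  have hsum1 : ∑ j, |Function.update (0 : Fin n → ℝ) i v j| = t := by
    rw [Finset.sum_eq_single i]
    · simp [hvabs]
    · intro b _ hb; simp [Function.update_of_ne hb]
    · simp
  have hsum2 : ∑ j, (Function.update (0 : Fin n → ℝ) i v j - y j) ^ 2
      = (∑ j, (y j) ^ 2) + (t * t - 2 * (t * |y i|)) := by
    have hcong : ∀ j ∈ Finset.univ, (Function.update (0 : Fin n → ℝ) i v j - y j) ^ 2
        = (y j) ^ 2 + (if j = i then v * v - 2 * (v * y i) else 0) := by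
      intro j _
      by_cases h : j = i
      · subst h; simp; ring
      · simp [Function.update_of_ne h, h]
    rw [Finset.sum_congr rfl hcong, Finset.sum_add_distrib, Finset.sum_ite_eq']
    simp [hvmul, hvv]
  have hc : ((2 - q) / (2 * (1 - q))) * t * t = ν * (2 - q) * t ^ q := by
    rw [mul_assoc, hsq']; field_simp
  have hlt : ν * (2 - q) * t ^ q < t * |y i| := by
    calc ν * (2 - q) * t ^ q = ((2 - q) / (2 * (1 - q))) * t * t := hc.symm
      _ < |y i| * t := mul_lt_mul_of_pos_right hi ht
      _ = t * |y i| := mul_comm _ _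
  have heq : ν * t ^ q + (t * t) / 2 = ν * (2 - q) * t ^ q := by linear_combination hsq' / 2
  have hfin : ν * t ^ q + (t * t) / 2 < t * |y i| := heq ▸ hlt
  rw [hsum1, hsum2]
  have hgoal : ν * t ^ q + ((∑ j : Fin n, (y j) ^ 2) + (t * t - 2 * (t * |y i|))) / 2
      < (∑ j : Fin n, (y j) ^ 2) / 2 := by
    have h := hfin
    generalize (∑ j : Fin n, (y j) ^ 2 : ℝ) = S
    generalize hT : (t : ℝ) ^ q = T at h
    linarith
  exact hgoal
end

section
/- Let 0 < q < 1, ν > 0, and y ∈ ℝⁿ with nonnegative entries. If 0 is not a minimizer of J_y(u) = ν‖u‖₁^q + (1/2)‖u−y‖₂², then for every ȳ ∈ ℝⁿ with ȳ_i > y_i for all i, 0 is not a minimizer of J_ȳ. -/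
open Real Set

theorem stmt_9 (n : ℕ) (q ν : ℝ) (hq0 : 0 < q) (hq1 : q < 1) (hν : 0 < ν)
    (y : Fin n → ℝ) (hy : ∀ i, 0 ≤ y i)
    (h0 : ∃ u : Fin n → ℝ,
      ν * (∑ i, |u i|) ^ q + (∑ i, (u i - y i) ^ 2) / 2 < (∑ i, (y i) ^ 2) / 2) :
    ∀ ybar : Fin n → ℝ, (∀ i, y i < ybar i) →
      ∃ u : Fin n → ℝ,
        ν * (∑ i, |u i|) ^ q + (∑ i, (u i - ybar i) ^ 2) / 2 < (∑ i, (ybar i) ^ 2) / 2 := by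
  intro ybar hyb
  obtain ⟨u, hu⟩ := h0
  refine ⟨fun i => |u i|, ?_⟩
  have habs : ∑ i, |(|u i|)| = ∑ i, |u i| := by
    apply Finset.sum_congr rfl; intro i _; exact abs_abs (u i)
  rw [habs]
  have key : ∑ i, ((|u i| - ybar i) ^ 2 - (ybar i) ^ 2)
      ≤ ∑ i, ((u i - y i) ^ 2 - (y i) ^ 2) := by
    apply Finset.sum_le_sum
    intro i _
    have h1 := abs_nonneg (u i)
    have h2 := le_abs_self (u i)
    have h3 := hy i
    have h4 := (hyb i).le
    nlinarith [sq_abs (u i), mul_le_mul_of_nonneg_left h4 h1,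
      mul_le_mul_of_nonneg_right h2 h3]
  rw [Finset.sum_sub_distrib, Finset.sum_sub_distrib] at key
  linarith
end

section
/- Let 0 < q < 1, ν > 0, τ > 0, and n ≥ 1. The set of minimizers of u ↦ ν‖u‖₁^q + (1/2)‖u − τ·𝟙‖₂² over ℝⁿ (where 𝟙 is the all-ones vector) equals {τ*·𝟙 : τ* ∈ argmin_{t∈ℝ} νn^(q-1)|t|^q + (1/2)(t−τ)²}. -/
open Real Set

private lemma sum_shift {n : ℕ} (y : Fin n → ℝ) (m : ℝ) (h : ∑ i, y i = n * m) :
    ∑ i, (y i) ^ 2 = n * m ^ 2 + ∑ i, (y i - m) ^ 2 := by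
  have expand : ∑ i, (y i - m) ^ 2
      = ∑ i, (y i) ^ 2 - 2 * m * (∑ i, y i) + n * m ^ 2 := by
    have h0 : ∀ i : Fin n, (y i - m) ^ 2 = (y i) ^ 2 - 2 * m * (y i) + m ^ 2 :=
      fun i => by ring
    simp_rw [h0]
    rw [Finset.sum_add_distrib, Finset.sum_sub_distrib, ← Finset.mul_sum,
      Finset.sum_const, Finset.card_univ, Fintype.card_fin, nsmul_eq_mul]
  rw [expand, h]; ring

private lemma npow_split (n : ℕ) (hn : 0 < n) (q : ℝ) :
    ((n : ℝ)) ^ q = n * (n : ℝ) ^ (q - 1) := by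
  have hn' : (0:ℝ) < n := by exact_mod_cast hn
  have h1 : (1:ℝ) + (q - 1) = q := by ring
  calc (n:ℝ) ^ q = (n:ℝ) ^ ((1:ℝ) + (q - 1)) := by rw [h1]
    _ = (n:ℝ) ^ (1:ℝ) * (n:ℝ) ^ (q - 1) := Real.rpow_add hn' _ _
    _ = n * (n:ℝ) ^ (q - 1) := by rw [Real.rpow_one]

private lemma const_val (n : ℕ) (hn : 0 < n) (q ν τ : ℝ) (s : ℝ) :
    ν * (∑ _i : Fin n, |s|) ^ q + (∑ _i : Fin n, (s - τ) ^ 2) / 2 =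
      n * (ν * (n:ℝ) ^ (q - 1) * |s| ^ q + (s - τ) ^ 2 / 2) := by
  have hn' : (0:ℝ) < n := by exact_mod_cast hn
  rw [Finset.sum_const, Finset.sum_const, Finset.card_univ, Fintype.card_fin,
    nsmul_eq_mul, nsmul_eq_mul, Real.mul_rpow hn'.le (abs_nonneg s),
    npow_split n hn q]
  ring

private lemma key (n : ℕ) (hn : 0 < n) (q ν τ : ℝ) (v : Fin n → ℝ) :
    ν * (∑ i, |v i|) ^ q + (∑ i, (v i - τ) ^ 2) / 2 =
      n * (ν * (n:ℝ) ^ (q - 1) * |(∑ i, |v i|) / n| ^ q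
            + ((∑ i, |v i|) / n - τ) ^ 2 / 2)
      + (∑ i, (|v i| - (∑ i, |v i|) / n) ^ 2) / 2
      + τ * ∑ i, (|v i| - v i) := by
  have hn' : (0:ℝ) < n := by exact_mod_cast hn
  set S := ∑ i, |v i| with hS_def
  set t := S / n with ht_def
  have hS : 0 ≤ S := Finset.sum_nonneg fun i _ => abs_nonneg _
  have ht : 0 ≤ t := div_nonneg hS hn'.le
  have habs : |t| = t := abs_of_nonneg ht
  have hSt : S = n * t := by rw [ht_def]; field_simp
  -- rpow part
  have h1 : ν * S ^ q = n * (ν * (n:ℝ) ^ (q - 1) * t ^ q) := by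
    rw [hSt, Real.mul_rpow hn'.le ht, npow_split n hn q]
    ring
  -- pointwise quadratic identity
  have h2 : ∀ i : Fin n, (v i - τ) ^ 2 = (|v i| - τ) ^ 2 + 2 * τ * (|v i| - v i) := by
    intro i
    rcases abs_cases (v i) with ⟨h, _⟩ | ⟨h, _⟩ <;> rw [h] <;> ring
  have hsum2 : ∑ i, (v i - τ) ^ 2
      = ∑ i, (|v i| - τ) ^ 2 + 2 * τ * ∑ i, (|v i| - v i) := by
    simp_rw [h2]
    rw [Finset.sum_add_distrib, ← Finset.mul_sum]
  have hshift : ∑ i : Fin n, (|v i| - τ) = n * (t - τ) := by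
    rw [Finset.sum_sub_distrib, Finset.sum_const, Finset.card_univ,
      Fintype.card_fin, nsmul_eq_mul, ← hS_def, hSt]
    ring
  have h3 := sum_shift (fun i => |v i| - τ) (t - τ) hshift
  simp only [sub_sub_sub_cancel_right] at h3
  rw [hsum2, h3, habs]
  linear_combination h1

theorem stmt_10 (n : ℕ) (hn : 1 ≤ n) (q ν τ : ℝ) (hq0 : 0 < q) (hq1 : q < 1)
    (hν : 0 < ν) (hτ : 0 < τ) :
    {u : Fin n → ℝ | ∀ v : Fin n → ℝ,
        ν * (∑ i, |u i|) ^ q + (∑ i, (u i - τ) ^ 2) / 2 ≤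
          ν * (∑ i, |v i|) ^ q + (∑ i, (v i - τ) ^ 2) / 2} =
    {w : Fin n → ℝ | ∃ t : ℝ,
        (∀ s : ℝ, ν * (n : ℝ) ^ (q - 1) * |t| ^ q + (t - τ) ^ 2 / 2 ≤
          ν * (n : ℝ) ^ (q - 1) * |s| ^ q + (s - τ) ^ 2 / 2) ∧
        w = fun _ => t} := by
  have hn0 : 0 < n := hn
  have hn' : (0:ℝ) < n := by exact_mod_cast hn0
  ext u
  simp only [Set.mem_setOf_eq]
  constructor
  · intro hu
    set t := (∑ i, |u i|) / n with ht_def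
    have hkey := key n hn0 q ν τ u
    have hEA : 0 ≤ ∑ i, (|u i| - t) ^ 2 :=
      Finset.sum_nonneg fun i _ => sq_nonneg _
    have hEB : 0 ≤ ∑ i, (|u i| - u i) :=
      Finset.sum_nonneg fun i _ => sub_nonneg.mpr (le_abs_self _)
    -- F u ≤ F (const t) = n * g t, hence error terms vanish
    have hconst := hu (fun _ => t)
    rw [const_val n hn0 q ν τ t] at hconst
    rw [hkey] at hconst
    have hEA0 : ∑ i, (|u i| - t) ^ 2 = 0 := by nlinarith
    have hEB0 : ∑ i, (|u i| - u i) = 0 := by nlinarith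
    refine ⟨t, ?_, ?_⟩
    · intro s
      have hs := hu (fun _ => s)
      rw [const_val n hn0 q ν τ s, hkey] at hs
      have : (n:ℝ) * (ν * (n:ℝ) ^ (q - 1) * |t| ^ q + (t - τ) ^ 2 / 2)
          ≤ (n:ℝ) * (ν * (n:ℝ) ^ (q - 1) * |s| ^ q + (s - τ) ^ 2 / 2) := by
        nlinarith
      exact le_of_mul_le_mul_left this hn'
    · funext i
      have hA : ∀ j ∈ Finset.univ, (|u j| - t) ^ 2 = 0 :=
        (Finset.sum_eq_zero_iff_of_nonneg fun j _ => sq_nonneg _).mp hEA0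
      have hB : ∀ j ∈ Finset.univ, |u j| - u j = 0 :=
        (Finset.sum_eq_zero_iff_of_nonneg
          fun j _ => sub_nonneg.mpr (le_abs_self _)).mp hEB0
      have h1 : |u i| = t := by
        have := hA i (Finset.mem_univ i)
        have := sq_eq_zero_iff.mp this
        linarith
      have h2 : |u i| = u i := by
        have := hB i (Finset.mem_univ i)
        linarith
      rw [← h2, h1]
  · rintro ⟨t, hto, rfl⟩
    intro v
    simp only
    rw [const_val n hn0 q ν τ t]
    have hkey := key n hn0 q ν τ v
    have hEA : 0 ≤ ∑ i, (|v i| - (∑ i, |v i|) / n) ^ 2 :=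
      Finset.sum_nonneg fun i _ => sq_nonneg _
    have hEB : 0 ≤ ∑ i, (|v i| - v i) :=
      Finset.sum_nonneg fun i _ => sub_nonneg.mpr (le_abs_self _)
    have hmul : (n:ℝ) * (ν * (n:ℝ) ^ (q - 1) * |t| ^ q + (t - τ) ^ 2 / 2)
        ≤ (n:ℝ) * (ν * (n:ℝ) ^ (q - 1) * |(∑ i, |v i|) / n| ^ q
            + ((∑ i, |v i|) / n - τ) ^ 2 / 2) :=
      mul_le_mul_of_nonneg_left (hto _) hn'.le
    nlinarith
end

section
/- Let 0 < q < 1, ν > 0, τ > 0, n ≥ 1, and i ∈ {1,…,n}. The set of minimizers of u ↦ ν‖u‖₁^q + (1/2)‖u − τ·e_i‖₂² over ℝⁿ equals {τ*·e_i : τ* ∈ argmin_{t∈ℝ} ν|t|^q + (1/2)(t−τ)²}, where e_i is the i-th standard basis vector. -/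
open Real Set

theorem stmt_11 (n : ℕ) (hn : 1 ≤ n) (q ν τ : ℝ) (hq0 : 0 < q) (hq1 : q < 1)
    (hν : 0 < ν) (hτ : 0 < τ) (i : Fin n) :
    {u : Fin n → ℝ | ∀ v : Fin n → ℝ,
        ν * (∑ j, |u j|) ^ q + (∑ j, (u j - τ * (if j = i then 1 else 0)) ^ 2) / 2 ≤
          ν * (∑ j, |v j|) ^ q + (∑ j, (v j - τ * (if j = i then 1 else 0)) ^ 2) / 2} =
    {w : Fin n → ℝ | ∃ t : ℝ,
        (∀ s : ℝ, ν * |t| ^ q + (t - τ) ^ 2 / 2 ≤ ν * |s| ^ q + (s - τ) ^ 2 / 2) ∧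
        w = fun j => if j = i then t else 0} := by
  -- helper computations
  have habs : ∀ t : ℝ, (∑ j, |if j = i then t else 0|) = |t| := by
    intro t
    simp [apply_ite abs]
  have hsq : ∀ t : ℝ,
      (∑ j, ((if j = i then t else 0) - τ * (if j = i then 1 else 0)) ^ 2) = (t - τ) ^ 2 := by
    intro t
    rw [Finset.sum_eq_single i]
    · simp
    · intro b _ hb; simp [hb]
    · simp
  have hsplit : ∀ v : Fin n → ℝ,
      (∑ j, (v j - τ * (if j = i then 1 else 0)) ^ 2)
        = (v i - τ) ^ 2 + ∑ j ∈ Finset.univ.erase i, (v j) ^ 2 := by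
    intro v
    rw [← Finset.add_sum_erase _ _ (Finset.mem_univ i), if_pos rfl, mul_one,
      Finset.sum_congr rfl
        (fun j hj => by rw [if_neg (Finset.ne_of_mem_erase hj), mul_zero, sub_zero])]
  have habsle : ∀ v : Fin n → ℝ, |v i| ≤ ∑ j, |v j| := by
    intro v
    have := Finset.single_le_sum (s := (Finset.univ : Finset (Fin n)))
      (f := fun j : Fin n => |v j|) (fun j _ => abs_nonneg (v j)) (Finset.mem_univ i)
    simpa using this
  have hpowmono : ∀ a b : ℝ, 0 ≤ a → a ≤ b → a ^ q ≤ b ^ q := by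
    intro a b ha hab
    exact Real.rpow_le_rpow ha hab hq0.le
  ext u
  simp only [Set.mem_setOf_eq]
  constructor
  · intro hu
    have hzero : ∀ j, j ≠ i → u j = 0 := by
      intro j hj
      have h := hu (fun k => if k = i then u i else 0)
      rw [habs, hsq, hsplit u] at h
      have h1 : ν * |u i| ^ q ≤ ν * (∑ k, |u k|) ^ q := by
        have := hpowmono _ _ (abs_nonneg (u i)) (habsle u)
        nlinarith
      have h2 : ∑ k ∈ Finset.univ.erase i, (u k) ^ 2 ≤ 0 := by nlinarith
      have h3 : (u j) ^ 2 ≤ 0 := by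
        have h4 : (u j) ^ 2 ≤ ∑ k ∈ Finset.univ.erase i, (u k) ^ 2 :=
          Finset.single_le_sum (f := fun k => (u k) ^ 2) (fun k _ => sq_nonneg _)
            (Finset.mem_erase.mpr ⟨hj, Finset.mem_univ j⟩)
        linarith
      nlinarith [sq_nonneg (u j)]
    have huval : u = fun j => if j = i then u i else 0 := by
      funext j
      by_cases hji : j = i
      · simp [hji]
      · simp [hji, hzero j hji]
    have e1 : (∑ j, |u j|) = |u i| :=
      Finset.sum_eq_single i (fun b _ hb => by simp [hzero b hb]) (by simp)
    have e2 : ∑ j ∈ Finset.univ.erase i, (u j) ^ 2 = 0 :=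
      Finset.sum_eq_zero fun j hj => by simp [hzero j (Finset.ne_of_mem_erase hj)]
    refine ⟨u i, fun s => ?_, huval⟩
    have h := hu (fun k => if k = i then s else 0)
    rw [habs, hsq, e1, hsplit u, e2, add_zero] at h
    exact h
  · rintro ⟨t, ht, rfl⟩
    intro v
    rw [habs, hsq, hsplit v]
    have h1 := ht (v i)
    have h2 : ν * |v i| ^ q ≤ ν * (∑ j, |v j|) ^ q := by
      have := hpowmono _ _ (abs_nonneg (v i)) (habsle v)
      nlinarith
    have h3 : 0 ≤ ∑ j ∈ Finset.univ.erase i, (v j) ^ 2 :=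
      Finset.sum_nonneg fun j _ => sq_nonneg _
    linarith
end

section
/- Let 0 < q < 1, ν > 0 and y ∈ ℝⁿ. If ‖y‖₁ < ((2−q)/(1−q))·(νq(1−q))^(1/(2−q)), then the zero vector is the unique minimizer of J_y(u) = ν‖u‖₁^q + (1/2)‖u−y‖₂² over ℝⁿ. -/
open Real Set

lemma key12 (q ν m : ℝ) (hq0 : 0 < q) (hq1 : q < 1) (hν : 0 < ν) (hm : 0 < m) :
    ((2 - q) / (1 - q)) * (ν * q * (1 - q)) ^ ((1:ℝ) / (2 - q)) ≤ ν * m ^ (q - 1) + m / 2 := by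
  have hr : 0 < 1 - q := by linarith
  have hp : 0 < 2 - q := by linarith
  set p := 2 - q with hpdef
  set r := 1 - q with hrdef
  have hpr : p = 1 + r := by rw [hpdef, hrdef]; ring
  have hprpos : 0 < p / r := div_pos hp hr
  -- q ≤ 2 ^ (-r)
  have hq2 : q ≤ (2:ℝ) ^ (-r) := by
    rw [← Real.log_le_log_iff hq0 (Real.rpow_pos_of_pos two_pos _), Real.log_rpow two_pos]
    have h1 := Real.log_le_sub_one_of_pos hq0
    have h2 := Real.log_two_lt_d9
    have h3 := Real.log_two_gt_d9
    nlinarith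
  -- step: q * (p/r)^r ≤ (p/(2*r))^r
  have hstep : q * (p/r)^r ≤ (p/(2*r))^r := by
    have h2r : (p/(2*r)) = (p/r)/2 := by rw [div_div, mul_comm]
    have hinv : (2:ℝ)^(-r) = ((2:ℝ)^r)⁻¹ := Real.rpow_neg (by norm_num) r
    have hmul : q * (p/r)^r ≤ (p/r)^r * ((2:ℝ)^r)⁻¹ := by
      rw [mul_comm ((p/r)^r) (((2:ℝ)^r)⁻¹)]
      exact mul_le_mul_of_nonneg_right (hq2.trans_eq hinv) (Real.rpow_nonneg hprpos.le r)
    have hd : (p/(2*r))^r = (p/r)^r / (2:ℝ)^r := by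
      rw [h2r, Real.div_rpow hprpos.le (by norm_num : (0:ℝ) ≤ 2)]
    rw [hd, div_eq_mul_inv ((p/r)^r) ((2:ℝ)^r)]
    exact hmul
  -- main polynomial-form inequality
  have hmain : (p/r)^p * (ν*q*r) ≤ (p*ν) * (p/(2*r))^r := by
    have e1 : (p/r)^p = (p/r)^r * (p/r) := by
      have h := Real.rpow_add_one (ne_of_gt hprpos) r
      rw [show r + (1:ℝ) = p by rw [hpr]; ring] at h
      exact h
    rw [e1]
    have e2 : (p/r)^r * (p/r) * (ν*q*r) = (p*ν) * (q * (p/r)^r) := by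
      field_simp
    rw [e2]
    exact mul_le_mul_of_nonneg_left hstep (by positivity)
  -- raise to power 1/p
  have h3 := Real.rpow_le_rpow (by positivity) hmain (by positivity : (0:ℝ) ≤ 1/p)
  have hLHS : ((p/r)^p * (ν*q*r)) ^ ((1:ℝ)/p) = (p/r) * (ν*q*r) ^ ((1:ℝ)/p) := by
    rw [Real.mul_rpow (by positivity) (by positivity), ← Real.rpow_mul hprpos.le,
      mul_one_div_cancel (ne_of_gt hp), Real.rpow_one]
  rw [hLHS] at h3
  refine le_trans h3 ?_
  -- AM-GM part
  have hw : 1/p + r/p = 1 := by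
    rw [← add_div, hpr]; field_simp
  have hgm := Real.geom_mean_le_arith_mean2_weighted (by positivity : (0:ℝ) ≤ 1/p)
    (by positivity : (0:ℝ) ≤ r/p) (by positivity : (0:ℝ) ≤ p*ν*m^(q-1))
    (by positivity : (0:ℝ) ≤ p*m/(2*r)) hw
  have eR : (1/p)*(p*ν*m^(q-1)) + (r/p)*(p*m/(2*r)) = ν * m^(q-1) + m/2 := by
    field_simp
  rw [eR] at hgm
  refine le_trans ?_ hgm
  -- identify LHSs
  have e4 : (p*ν*m^(q-1)) ^ ((1:ℝ)/p) = (p*ν)^((1:ℝ)/p) * m ^ ((q-1)/p) := by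
    rw [Real.mul_rpow (by positivity) (by positivity), ← Real.rpow_mul hm.le]
    ring_nf
  have e5 : (p*m/(2*r)) ^ (r/p) = (p/(2*r))^(r/p) * m ^ (r/p) := by
    rw [show p*m/(2*r) = (p/(2*r))*m by ring,
      Real.mul_rpow (by positivity) hm.le]
  rw [e4, e5]
  have e6 : (p*ν)^((1:ℝ)/p) * m ^ ((q-1)/p) * ((p/(2*r))^(r/p) * m ^ (r/p))
      = (p*ν)^((1:ℝ)/p) * (p/(2*r))^(r/p) * (m ^ ((q-1)/p) * m ^ (r/p)) := by ring
  have e7 : m ^ ((q-1)/p) * m ^ (r/p) = 1 := by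
    rw [← Real.rpow_add hm, ← add_div,
      show q - 1 + r = 0 by rw [hrdef]; ring, zero_div, Real.rpow_zero]
  rw [e6, e7, mul_one]
  -- remains : (p/r) * (ν*q*r)^(1/p) ≤ (p*ν)^(1/p) * (p/(2*r))^(r/p)
  have e8 : ((p*ν) * (p/(2*r))^r) ^ ((1:ℝ)/p) = (p*ν)^((1:ℝ)/p) * (p/(2*r))^(r/p) := by
    rw [Real.mul_rpow (by positivity) (by positivity), ← Real.rpow_mul (by positivity),
      show r * ((1:ℝ)/p) = r/p by ring]
  rw [← e8]

theorem stmt_12 (n : ℕ) (q ν : ℝ) (hq0 : 0 < q) (hq1 : q < 1) (hν : 0 < ν)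
    (y : Fin n → ℝ)
    (hy : ∑ i, |y i| < ((2 - q) / (1 - q)) * (ν * q * (1 - q)) ^ ((1:ℝ) / (2 - q))) :
    ∀ u : Fin n → ℝ, u ≠ 0 →
      (∑ i, (y i) ^ 2) / 2 < ν * (∑ i, |u i|) ^ q + (∑ i, (u i - y i) ^ 2) / 2 := by
  intro u hu
  obtain ⟨j, hj⟩ := Function.ne_iff.mp hu
  have hj' : u j ≠ 0 := hj
  obtain ⟨i₀, -, hmax⟩ := Finset.exists_max_image Finset.univ (fun i => |u i|)
    ⟨j, Finset.mem_univ j⟩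
  set m := |u i₀| with hmdef
  have hm0 : 0 < m := lt_of_lt_of_le (abs_pos.mpr hj') (hmax j (Finset.mem_univ j))
  set T := ((2 - q) / (1 - q)) * (ν * q * (1 - q)) ^ ((1:ℝ) / (2 - q)) with hT
  set B := ∑ i, |y i| with hB
  -- ∑ u y ≤ m * B
  have hA : ∑ i, u i * y i ≤ m * B := by
    calc ∑ i, u i * y i ≤ ∑ i, |u i * y i| :=
          Finset.sum_le_sum (fun i _ => le_abs_self _)
      _ ≤ ∑ i, m * |y i| := by
          refine Finset.sum_le_sum (fun i _ => ?_)
          rw [abs_mul]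
          exact mul_le_mul_of_nonneg_right (hmax i (Finset.mem_univ i)) (abs_nonneg _)
      _ = m * B := by rw [hB, Finset.mul_sum]
  -- m^2 ≤ ∑ u^2
  have hB2 : m^2 ≤ ∑ i, (u i)^2 := by
    have := Finset.single_le_sum (f := fun i => (u i)^2)
      (fun i _ => sq_nonneg _) (Finset.mem_univ i₀)
    rw [hmdef, sq_abs]
    exact this
  -- m ≤ ∑ |u i|
  have hmt : m ≤ ∑ i, |u i| :=
    Finset.single_le_sum (f := fun i => |u i|) (fun i _ => abs_nonneg _)
      (Finset.mem_univ i₀)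
  have hrq : m ^ q ≤ (∑ i, |u i|) ^ q :=
    Real.rpow_le_rpow hm0.le hmt hq0.le
  -- key inequality
  have hkey := key12 q ν m hq0 hq1 hν hm0
  have hmq : ν * m ^ q + m^2/2 = m * (ν * m ^ (q-1) + m/2) := by
    rw [show q = q - 1 + 1 by ring, Real.rpow_add_one (ne_of_gt hm0)]
    ring_nf
  have hchain : m * B < ν * m ^ q + m^2/2 := by
    rw [hmq]
    have h1 : m * B < m * T := by
      exact (mul_lt_mul_iff_right₀ hm0).mpr hy
    have h2 : m * T ≤ m * (ν * m ^ (q-1) + m/2) :=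
      mul_le_mul_of_nonneg_left hkey hm0.le
    linarith
  have hexp : ∑ i, (u i - y i)^2 = ∑ i, (u i)^2 - 2*(∑ i, u i * y i) + ∑ i, (y i)^2 := by
    rw [Finset.mul_sum, ← Finset.sum_sub_distrib, ← Finset.sum_add_distrib]
    exact Finset.sum_congr rfl (fun i _ => by ring)
  have hfin : ν * m ^ q ≤ ν * (∑ i, |u i|) ^ q :=
    mul_le_mul_of_nonneg_left hrq hν.le
  rw [hexp]
  linarith
end

section
/- For ν > 0 and q = 1/2, the scalar prox threshold constant satisfies: if |τ| < (3/2)ν^(2/3) then 0 is the unique minimizer of t ↦ ν|t|^(1/2) + (1/2)(t−τ)²; if |τ| = (3/2)ν^(2/3) then the minimizers are exactly {0, sign(τ)·ν^(2/3)}. -/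
open Real

set_option maxHeartbeats 1000000 in
theorem stmt_17 (ν τ : ℝ) (hν : 0 < ν)
    (f : ℝ → ℝ) (hf : ∀ t : ℝ, f t = ν * |t| ^ ((1:ℝ)/2) + (t - τ) ^ 2 / 2) :
    (|τ| < (3/2) * ν ^ ((2:ℝ)/3) → ∀ t : ℝ, t ≠ 0 → f 0 < f t) ∧
    (|τ| = (3/2) * ν ^ ((2:ℝ)/3) →
      {t : ℝ | ∀ s : ℝ, f t ≤ f s} = {0, Real.sign τ * ν ^ ((2:ℝ)/3)}) := by
  obtain ⟨a, hadef⟩ : ∃ a : ℝ, a = ν ^ ((1:ℝ)/3) := ⟨_, rfl⟩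
  have ha : 0 < a := hadef ▸ Real.rpow_pos_of_pos hν _
  have ha3 : a ^ 3 = ν := by
    rw [hadef, ← Real.rpow_natCast (ν ^ ((1:ℝ)/3)) 3, ← Real.rpow_mul hν.le]
    norm_num
  have ha2 : ν ^ ((2:ℝ)/3) = a ^ 2 := by
    rw [hadef, ← Real.rpow_natCast (ν ^ ((1:ℝ)/3)) 2, ← Real.rpow_mul hν.le]
    norm_num
  have key : ∀ t : ℝ, f t - f 0 = ν * Real.sqrt |t| + t ^ 2 / 2 - t * τ := by
    intro t
    rw [hf t, hf 0, abs_zero, Real.zero_rpow (by norm_num), Real.sqrt_eq_rpow]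
    ring
  have W : ∀ t : ℝ, ∃ s : ℝ, 0 ≤ s ∧ s ^ 2 = |t| ∧ t ^ 2 = s ^ 4 ∧
      t * τ ≤ s ^ 2 * |τ| ∧ f t - f 0 = ν * s + s ^ 4 / 2 - t * τ := by
    intro t
    refine ⟨Real.sqrt |t|, Real.sqrt_nonneg _, Real.sq_sqrt (abs_nonneg t), ?_, ?_, ?_⟩
    · rw [show (Real.sqrt |t|) ^ 4 = ((Real.sqrt |t|) ^ 2) ^ 2 by ring,
        Real.sq_sqrt (abs_nonneg t), sq_abs]
    · rw [Real.sq_sqrt (abs_nonneg t)]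
      calc t * τ ≤ |t * τ| := le_abs_self _
        _ = |t| * |τ| := abs_mul _ _
    · rw [key t, show (Real.sqrt |t|) ^ 4 = ((Real.sqrt |t|) ^ 2) ^ 2 by ring,
        Real.sq_sqrt (abs_nonneg t), sq_abs]
  constructor
  · -- strict case
    intro hlt t ht
    rw [ha2] at hlt
    obtain ⟨s, hs0, hs2, ht2, h1, hk⟩ := W t
    have hspos : 0 < s := by nlinarith [abs_pos.mpr ht]
    have h2 : s ^ 2 * |τ| < s ^ 2 * ((3/2) * a ^ 2) :=
      mul_lt_mul_of_pos_left hlt (by positivity)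
    have h3 : ν * s + s ^ 4 / 2 - s ^ 2 * ((3/2) * a ^ 2) =
        (s / 2) * ((s - a) ^ 2 * (s + 2 * a)) := by
      rw [← ha3]; ring
    have h4 : 0 ≤ (s / 2) * ((s - a) ^ 2 * (s + 2 * a)) := by positivity
    have : 0 < f t - f 0 := by rw [hk]; linarith
    linarith
  · -- equality case
    intro heq
    rw [ha2] at heq
    have hτ : τ ≠ 0 := by
      intro h
      rw [h, abs_zero] at heq
      nlinarith [mul_pos ha ha]
    have hmin : ∀ u : ℝ, f 0 ≤ f u := by
      intro u
      obtain ⟨s, hs0, hs2, ht2, h1, hk⟩ := W u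
      have h1' : u * τ ≤ s ^ 2 * ((3/2) * a ^ 2) := by rw [← heq]; exact h1
      have h3 : ν * s + s ^ 4 / 2 - s ^ 2 * ((3/2) * a ^ 2) =
          (s / 2) * ((s - a) ^ 2 * (s + 2 * a)) := by
        rw [← ha3]; ring
      have h4 : 0 ≤ (s / 2) * ((s - a) ^ 2 * (s + 2 * a)) := by positivity
      linarith [hk]
    have hft0 : f (Real.sign τ * a ^ 2) = f 0 := by
      obtain ⟨s, hs0, hs2, ht2, h1, hk⟩ := W (Real.sign τ * a ^ 2)
      have habs : |Real.sign τ * a ^ 2| = a ^ 2 := by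
        rcases lt_or_gt_of_ne hτ with h | h
        · rw [Real.sign_of_neg h, abs_of_nonpos (by nlinarith)]; ring
        · rw [Real.sign_of_pos h, abs_of_nonneg (by nlinarith)]; ring
      have hsa : s = a := by
        have : s ^ 2 = a ^ 2 := by rw [hs2, habs]
        nlinarith
      have hst : (Real.sign τ * a ^ 2) * τ = a ^ 2 * |τ| := by
        rcases lt_or_gt_of_ne hτ with h | h
        · rw [Real.sign_of_neg h, abs_of_neg h]; ring
        · rw [Real.sign_of_pos h, abs_of_pos h]; ring
      have : f (Real.sign τ * a ^ 2) - f 0 = 0 := by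
        rw [hk, hsa, hst, heq, ← ha3]; ring
      linarith
    ext t
    simp only [Set.mem_setOf_eq, Set.mem_insert_iff, Set.mem_singleton_iff, ha2]
    constructor
    · intro h
      by_cases ht : t = 0
      · exact Or.inl ht
      · right
        have hle : f t ≤ f 0 := h 0
        obtain ⟨s, hs0, hs2, ht2, h1, hk⟩ := W t
        have hspos : 0 < s := by nlinarith [abs_pos.mpr ht]
        have h1' : t * τ ≤ s ^ 2 * ((3/2) * a ^ 2) := by rw [← heq]; exact h1
        have h3 : ν * s + s ^ 4 / 2 - s ^ 2 * ((3/2) * a ^ 2) =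
            (s / 2) * ((s - a) ^ 2 * (s + 2 * a)) := by
          rw [← ha3]; ring
        have hchain : (s / 2) * ((s - a) ^ 2 * (s + 2 * a)) ≤ 0 := by
          linarith [hk]
        have hsa : s = a := by
          have hX : (s - a) ^ 2 * (s + 2 * a) ≤ 0 :=
            le_of_mul_le_mul_left (by rw [mul_zero]; exact hchain) (by positivity)
          have hsq : (s - a) ^ 2 ≤ 0 :=
            le_of_mul_le_mul_right (by rw [zero_mul]; exact hX)
              (by positivity : (0:ℝ) < s + 2 * a)
          have h0 : (s - a) ^ 2 = 0 := le_antisymm hsq (sq_nonneg _)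
          have := pow_eq_zero_iff (n := 2) (by norm_num) |>.mp h0
          linarith
        have habs : |t| = a ^ 2 := by rw [← hs2, hsa]
        have heqτ : t * τ = a ^ 2 * |τ| := by
          have hub : t * τ ≤ a ^ 2 * |τ| := by rw [← hsa]; exact h1
          have h0 : ν * s + s ^ 4 / 2 - t * τ ≤ 0 := by linarith [hk]
          rw [hsa] at h0
          have hνa : ν * a = a ^ 4 := by rw [← ha3]; ring
          have h5 : a ^ 2 * |τ| = 3 / 2 * a ^ 4 := by rw [heq]; ring
          linarith
        rcases abs_cases t with ⟨h5, h6⟩ | ⟨h5, h6⟩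
        · have htval : t = a ^ 2 := by rw [← h5, habs]
          have hτpos : 0 < τ := by
            rcases lt_or_gt_of_ne hτ with hneg | hpos
            · exfalso
              rw [htval, abs_of_neg hneg] at heqτ
              nlinarith [mul_pos ha ha]
            · exact hpos
          rw [Real.sign_of_pos hτpos, htval]; ring
        · have htval : t = -(a ^ 2) := by rw [← neg_eq_iff_eq_neg, ← h5, habs]
          have hτneg : τ < 0 := by
            rcases lt_or_gt_of_ne hτ with hneg | hpos
            · exact hneg
            · exfalso
              rw [htval, abs_of_pos hpos] at heqτ
              nlinarith [mul_pos ha ha]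
          rw [Real.sign_of_neg hτneg, htval]; ring
    · rintro (rfl | rfl) u
      · exact hmin u
      · rw [hft0]; exact hmin u
end

section
/- Let 0 < q < 1, ν > 0, and let c_{ν,q} = ((2−q)/(2(1−q)))·(2ν(1−q))^(1/(2−q)). For any τ₂ > τ₁ ≥ c_{ν,q}, every minimizer of t ↦ ν|t|^q + (1/2)(t−τ₁)² is strictly less than the (unique) minimizer of t ↦ ν|t|^q + (1/2)(t−τ₂)²; i.e., max prox_{ν|·|^q}(τ₁) < prox_{ν|·|^q}(τ₂). -/
open Real

theorem stmt_18 (q ν τ₁ τ₂ : ℝ) (hq0 : 0 < q) (hq1 : q < 1) (hν : 0 < ν)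
    (hτ₁ : ((2 - q) / (2 * (1 - q))) * (2 * ν * (1 - q)) ^ ((1:ℝ) / (2 - q)) ≤ τ₁)
    (hτ : τ₁ < τ₂)
    (t₁ t₂ : ℝ)
    (ht₁ : ∀ s : ℝ, ν * |t₁| ^ q + (t₁ - τ₁) ^ 2 / 2 ≤ ν * |s| ^ q + (s - τ₁) ^ 2 / 2)
    (ht₂ : ∀ s : ℝ, ν * |t₂| ^ q + (t₂ - τ₂) ^ 2 / 2 ≤ ν * |s| ^ q + (s - τ₂) ^ 2 / 2) :
    t₁ < t₂ := by
  have h1q : (0:ℝ) < 1 - q := by linarith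
  have h2q : (0:ℝ) < 2 - q := by linarith
  have hA : (0:ℝ) < 2 * ν * (1 - q) := by positivity
  set s : ℝ := (2 * ν * (1 - q)) ^ ((1:ℝ) / (2 - q)) with hs_def
  have hs : 0 < s := rpow_pos_of_pos hA _
  have hc : 0 < ((2 - q) / (2 * (1 - q))) * s := by positivity
  have hτ₂0 : 0 < τ₂ := lt_of_lt_of_le hc hτ₁ |>.trans hτ
  -- key identity: s ^ (2 - q) = 2 ν (1 - q)
  have hs2q : s ^ (2 - q) = 2 * ν * (1 - q) := by
    rw [hs_def, ← Real.rpow_mul hA.le, one_div_mul_cancel h2q.ne', Real.rpow_one]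
  have hsq : s ^ q * (2 * ν * (1 - q)) = s ^ 2 := by
    rw [← hs2q, ← Real.rpow_add hs, show q + (2 - q) = (2:ℝ) by ring,
      Real.rpow_two]
  -- step 1: t₁ ≤ t₂
  have hle : t₁ ≤ t₂ := by
    have h1 := ht₁ t₂
    have h2 := ht₂ t₁
    nlinarith [mul_pos (sub_pos.mpr hτ) (sub_pos.mpr hτ)]
  rcases lt_or_eq_of_le hle with h | heq
  · exact h
  -- now t₁ = t₂ =: t; derive a contradiction
  exfalso
  set t := t₁ with ht_def
  rw [← heq] at ht₂
  -- t ≥ 0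
  have ht0 : 0 ≤ t := by
    by_contra hneg
    push_neg at hneg
    have := ht₂ (-t)
    rw [abs_neg] at this
    nlinarith [mul_pos (neg_pos.mpr hneg) hτ₂0]
  -- t ≠ 0 : test point s beats 0
  have htne : t ≠ 0 := by
    intro h0
    have hkey := ht₂ s
    rw [h0, abs_zero, Real.zero_rpow hq0.ne', abs_of_pos hs] at hkey
    -- ν * s^q + (s - τ₂)^2/2 < τ₂^2/2 should contradict hkey
    have hsc : ((2 - q) / (2 * (1 - q))) * s < τ₂ := lt_of_le_of_lt hτ₁ hτ
    have hsc' : (2 - q) * s < τ₂ * (2 * (1 - q)) := by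
      rw [div_mul_eq_mul_div, div_lt_iff₀ (by positivity : (0:ℝ) < 2 * (1 - q))] at hsc
      linarith
    have hkey2 : τ₂ ^ 2 / 2 * (2 * (1 - q)) ≤
        (ν * s ^ q + (s - τ₂) ^ 2 / 2) * (2 * (1 - q)) :=
      mul_le_mul_of_nonneg_right (by nlinarith [hkey]) (by positivity)
    nlinarith [hkey2, hsq, mul_lt_mul_of_pos_right hsc' hs]
  have htpos : 0 < t := lt_of_le_of_ne ht0 (Ne.symm htne)
  -- differentiability at t > 0
  have hev : ∀ᶠ x in nhds t, |x| = x := by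
    filter_upwards [eventually_gt_nhds htpos] with x hx using abs_of_pos hx
  have hderiv : ∀ τ : ℝ, HasDerivAt (fun x : ℝ => ν * |x| ^ q + (x - τ) ^ 2 / 2)
      (ν * (q * t ^ (q - 1)) + (2 * (t - τ) ^ 1 * 1) / 2) t := by
    intro τ
    have h1 : HasDerivAt (fun x : ℝ => ν * x ^ q) (ν * (q * t ^ (q - 1))) t :=
      (Real.hasDerivAt_rpow_const (Or.inl htpos.ne')).const_mul ν
    have h2 : HasDerivAt (fun x : ℝ => (x - τ) ^ 2 / 2) ((2 * (t - τ) ^ 1 * 1) / 2) t :=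
      (((hasDerivAt_id t).sub_const τ).pow 2).div_const 2
    have h3 := h1.add h2
    refine h3.congr_of_eventuallyEq ?_
    filter_upwards [hev] with x hx
    rw [hx]
    rfl
  have hmin₁ : IsLocalMin (fun x : ℝ => ν * |x| ^ q + (x - τ₁) ^ 2 / 2) t :=
    Filter.Eventually.of_forall ht₁
  have hmin₂ : IsLocalMin (fun x : ℝ => ν * |x| ^ q + (x - τ₂) ^ 2 / 2) t :=
    Filter.Eventually.of_forall ht₂
  have e1 := hmin₁.hasDerivAt_eq_zero (hderiv τ₁)
  have e2 := hmin₂.hasDerivAt_eq_zero (hderiv τ₂)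
  simp only [pow_one, mul_one] at e1 e2
  have : τ₁ = τ₂ := by linarith
  linarith
end
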